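/- arXiv:1909.04268 — 2 statements merged into one kernel-verified Lean document; each statement's English description precedes it below -/
import Mathlib

section
/- Let M be a matroid with distinct weights w, p ∈ (0,1), S a p-sample of the ground set, R the set of improving elements, and F any subset of the ground set. Then E[rank(R ∩ F)] ≥ (1−p)·E[|F ∩ OPT_w(S ∪ F)|]. -/
open Finset BigOperators
open scoped Classical

structure FinMatroid (γ : Type*) [DecidableEq γ] [Fintype γ] where
  Indep : Finset γ → Prop
  indep_empty : Indep ∅
  indep_subset : ∀ ⦃A B : Finset γ⦄, Indep B → A ⊆ B → Indep A
  indep_exchange : ∀ ⦃A B : Finset γ⦄, Indep A → Indep B → A.card < B.card →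
    ∃ x ∈ B, x ∉ A ∧ Indep (insert x A)

variable {γ : Type*} [DecidableEq γ] [Fintype γ]

/-- The rank of a set `A`: maximum cardinality of an independent subset of `A`. -/
noncomputable def FinMatroid.rank (M : FinMatroid γ) (A : Finset γ) : ℕ :=
  (A.powerset.filter fun S => M.Indep S).sup Finset.card

/-- The weighted rank of a set `A`: maximum weight of an independent subset of `A`. -/
noncomputable def FinMatroid.wrank (M : FinMatroid γ) (w : γ → ℝ) (A : Finset γ) : ℝ :=
  (A.powerset.filter fun S => M.Indep S).sup'
    ⟨∅, by simp [M.indep_empty]⟩ (fun S => ∑ i ∈ S, w i)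

/-- A distribution over subsets of the ground set. -/
structure FinDist (γ : Type*) [DecidableEq γ] [Fintype γ] where
  p : Finset γ → ℝ
  nonneg : ∀ S, 0 ≤ p S
  sum_one : ∑ S : Finset γ, p S = 1

/-- Marginal probability of element `i` under distribution `D`. -/
noncomputable def FinDist.marg (D : FinDist γ) (i : γ) : ℝ :=
  ∑ R : Finset γ, D.p R * (if i ∈ R then 1 else 0)

/-- A (randomized) contention resolution map: `q R S` is the probability that the map
outputs `S` on input `R`; the output is always an independent subset of the input. -/
structure CRM (M : FinMatroid γ) where
  q : Finset γ → Finset γ → ℝ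
  nonneg : ∀ R S, 0 ≤ q R S
  sum_one : ∀ R, ∑ S : Finset γ, q R S = 1
  feasible : ∀ R S, q R S ≠ 0 → S ⊆ R ∧ M.Indep S

/-- Probability that element `i` is selected by the CRM `φ` when the input is drawn from `D`. -/
noncomputable def selProb (M : FinMatroid γ) (D : FinDist γ) (φ : CRM M) (i : γ) : ℝ :=
  ∑ R : Finset γ, D.p R * ∑ S : Finset γ, φ.q R S * (if i ∈ S then 1 else 0)

/-- `φ` is `a`-competitive for `D` : `Pr[i ∈ R] ≤ a · Pr[i ∈ φ(R)]` for all `i`. -/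
def Competitive (M : FinMatroid γ) (D : FinDist γ) (a : ℝ) (φ : CRM M) : Prop :=
  ∀ i : γ, D.marg i ≤ a * selProb M D φ i

/-- `D` is `a`-uncontentious: it admits an `a`-competitive contention resolution map. -/
def Uncontentious (M : FinMatroid γ) (D : FinDist γ) (a : ℝ) : Prop :=
  ∃ φ : CRM M, Competitive M D a φ

/-- `D` is `a`-uncontentious, weighted-rank form: `E[rank_w(R)] ≥ (1/a)·E[w(R)]` for all `w ≥ 0`. -/
def UncontentiousW (M : FinMatroid γ) (D : FinDist γ) (a : ℝ) : Prop :=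
  ∀ w : γ → ℝ, (∀ i, 0 ≤ w i) →
    ∑ R : Finset γ, D.p R * M.wrank w R ≥ (1 / a) * ∑ R : Finset γ, D.p R * ∑ i ∈ R, w i

/-- Probability of sampling `S` when each of the `n` ground elements is included
independently with probability `p`. -/
noncomputable def prodP (p : ℝ) (S : Finset γ) : ℝ :=
  p ^ S.card * (1 - p) ^ (Fintype.card γ - S.card)

/-- The maximum-weight independent subset of `A` (for distinct positive weights, via the
greedy characterization: `i ∈ OPT_w(A)` iff `w i > 0` and `i` is not spanned by the
higher-weight elements of `A`), excluding zero-weight elements. -/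
noncomputable def FinMatroid.OPT (M : FinMatroid γ) (w : γ → ℝ) (A : Finset γ) : Finset γ :=
  A.filter fun i => 0 < w i ∧
    M.rank (A.filter fun j => w i < w j) < M.rank (insert i (A.filter fun j => w i < w j))

/-- The set of improving elements given the sample `S`: elements outside `S` that
belong to `OPT_w(S ∪ {i})`. -/
noncomputable def FinMatroid.Improving (M : FinMatroid γ) (w : γ → ℝ) (S : Finset γ) : Finset γ :=
  Finset.univ.filter fun i => i ∉ S ∧ i ∈ M.OPT w (insert i S)

section Aux

lemma FinMatroid.card_le_rank (M : FinMatroid γ) {T A : Finset γ} (hT : M.Indep T)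
    (hTA : T ⊆ A) : T.card ≤ M.rank A :=
  Finset.le_sup (by simp [Finset.mem_filter, Finset.mem_powerset, hTA, hT])

lemma FinMatroid.rank_le_card (M : FinMatroid γ) (A : Finset γ) : M.rank A ≤ A.card :=
  Finset.sup_le fun T hT =>
    Finset.card_le_card (Finset.mem_powerset.1 (Finset.mem_filter.1 hT).1)

lemma FinMatroid.exists_basis (M : FinMatroid γ) (A : Finset γ) :
    ∃ T, T ⊆ A ∧ M.Indep T ∧ T.card = M.rank A := by
  obtain ⟨T, hT, hTe⟩ := Finset.exists_mem_eq_sup (A.powerset.filter fun S => M.Indep S)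
    ⟨∅, by simp [M.indep_empty]⟩ Finset.card
  rcases Finset.mem_filter.1 hT with ⟨h1, h2⟩
  exact ⟨T, Finset.mem_powerset.1 h1, h2, hTe.symm⟩

lemma FinMatroid.exists_basis_superset_aux (M : FinMatroid γ) (A : Finset γ) :
    ∀ n (T : Finset γ), M.Indep T → T ⊆ A → M.rank A - T.card ≤ n →
      ∃ B, T ⊆ B ∧ B ⊆ A ∧ M.Indep B ∧ B.card = M.rank A := by
  intro n
  induction n with
  | zero =>
    intro T hT hTA h
    have h2 := M.card_le_rank hT hTA
    exact ⟨T, Finset.Subset.refl T, hTA, hT, by omega⟩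
  | succ n ih =>
    intro T hT hTA h
    by_cases hc : M.rank A ≤ T.card
    · have h2 := M.card_le_rank hT hTA
      exact ⟨T, Finset.Subset.refl T, hTA, hT, by omega⟩
    · push_neg at hc
      obtain ⟨C, hCA, hC, hCc⟩ := M.exists_basis A
      obtain ⟨x, hxC, hxT, hx⟩ := M.indep_exchange hT hC (by omega)
      obtain ⟨B, hTB, hBA, hB, hBc⟩ := ih (insert x T) hx
        (Finset.insert_subset (hCA hxC) hTA)
        (by rw [Finset.card_insert_of_notMem hxT]; omega)
      exact ⟨B, (Finset.subset_insert x T).trans hTB, hBA, hB, hBc⟩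

lemma FinMatroid.exists_basis_superset (M : FinMatroid γ) {A T : Finset γ}
    (hT : M.Indep T) (hTA : T ⊆ A) :
    ∃ B, T ⊆ B ∧ B ⊆ A ∧ M.Indep B ∧ B.card = M.rank A :=
  M.exists_basis_superset_aux A _ T hT hTA le_rfl

/-- Key matroid fact: if adding `i` increases the rank of `X`, it increases the rank
of every subset `Y ⊆ X`. -/
lemma FinMatroid.rank_insert_lt_of_subset (M : FinMatroid γ) {X Y : Finset γ} {i : γ}
    (hYX : Y ⊆ X) (h : M.rank X < M.rank (insert i X)) :
    M.rank Y < M.rank (insert i Y) := by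
  have hiX : i ∉ X := fun hi => by
    rw [Finset.insert_eq_self.2 hi] at h; exact lt_irrefl _ h
  obtain ⟨BY, hBYY, hBY, hBYc⟩ := M.exists_basis Y
  obtain ⟨BX, hBYBX, hBXX, hBX, hBXc⟩ := M.exists_basis_superset hBY (hBYY.trans hYX)
  obtain ⟨D, hDA, hD, hDc⟩ := M.exists_basis (insert i X)
  obtain ⟨x, hxD, hxBX, hx⟩ := M.indep_exchange hBX hD (by omega)
  have hxi : x = i := by
    rcases Finset.mem_insert.1 (hDA hxD) with h' | h'
    · exact h'
    · exfalso
      have h2 := M.card_le_rank hx (Finset.insert_subset h' hBXX)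
      rw [Finset.card_insert_of_notMem hxBX] at h2; omega
  subst hxi
  have hiBY : x ∉ BY := fun hi => hiX (hYX (hBYY hi))
  have h1 : M.Indep (insert x BY) :=
    M.indep_subset hx (Finset.insert_subset_insert _ hBYBX)
  have h2 := M.card_le_rank h1 (Finset.insert_subset_insert _ hBYY)
  rw [Finset.card_insert_of_notMem hiBY, hBYc] at h2
  omega

lemma FinMatroid.mem_OPT_of_subset (M : FinMatroid γ) {w : γ → ℝ} {A B : Finset γ} {i : γ}
    (hBA : B ⊆ A) (hiB : i ∈ B) (hi : i ∈ M.OPT w A) : i ∈ M.OPT w B := by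
  rcases Finset.mem_filter.1 hi with ⟨-, hw, hr⟩
  exact Finset.mem_filter.2 ⟨hiB, hw,
    M.rank_insert_lt_of_subset (Finset.filter_subset_filter _ hBA) hr⟩

lemma FinMatroid.indep_of_forall_rank (M : FinMatroid γ) {w : γ → ℝ}
    (hinj : Function.Injective w) :
    ∀ T : Finset γ, (∀ i ∈ T,
        M.rank (T.filter fun j => w i < w j)
          < M.rank (insert i (T.filter fun j => w i < w j))) →
      M.Indep T := by
  intro T
  induction T using Finset.strongInduction with
  | _ T ih =>
    intro hT
    rcases T.eq_empty_or_nonempty with rfl | hne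
    · exact M.indep_empty
    obtain ⟨i, hiT, hmin⟩ := Finset.exists_min_image T w hne
    set T' := T.erase i with hT'def
    have hfilter : ∀ j ∈ T',
        (T'.filter fun k => w j < w k) = T.filter fun k => w j < w k := by
      intro j hj
      apply Finset.Subset.antisymm
      · exact Finset.filter_subset_filter _ (Finset.erase_subset _ _)
      · intro k hk
        rcases Finset.mem_filter.1 hk with ⟨hkT, hjk⟩
        refine Finset.mem_filter.2 ⟨Finset.mem_erase.2 ⟨?_, hkT⟩, hjk⟩
        rintro rfl
        exact absurd hjk (not_lt.2 (hmin j (Finset.mem_of_mem_erase hj)))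
    have hT'indep : M.Indep T' := ih T' (Finset.erase_ssubset hiT)
      (fun j hj => by rw [hfilter j hj]; exact hT j (Finset.mem_of_mem_erase hj))
    have hfi : (T.filter fun k => w i < w k) = T' := by
      ext k
      simp only [Finset.mem_filter, hT'def, Finset.mem_erase]
      constructor
      · rintro ⟨hkT, hik⟩
        exact ⟨fun he => by subst he; exact lt_irrefl _ hik, hkT⟩
      · rintro ⟨hki, hkT⟩
        refine ⟨hkT, lt_of_le_of_ne (hmin k hkT) fun he => hki (hinj he).symm⟩
    have hri := hT i hiT
    rw [hfi, Finset.insert_erase hiT] at hri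
    have hrT' : M.rank T' = T'.card :=
      le_antisymm (M.rank_le_card T') (M.card_le_rank hT'indep (Finset.Subset.refl T'))
    have hc : T'.card = T.card - 1 := Finset.card_erase_of_mem hiT
    have hpos : 0 < T.card := Finset.card_pos.2 hne
    obtain ⟨B, hBT, hB, hBc⟩ := M.exists_basis T
    have hBeq : B = T := Finset.eq_of_subset_of_card_le hBT (by omega)
    rw [← hBeq]; exact hB

lemma FinMatroid.indep_OPT (M : FinMatroid γ) {w : γ → ℝ} (hinj : Function.Injective w)
    (A : Finset γ) : M.Indep (M.OPT w A) := by
  apply M.indep_of_forall_rank hinj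
  intro i hi
  rcases Finset.mem_filter.1 hi with ⟨hiA, hw, hr⟩
  exact M.rank_insert_lt_of_subset
    (Finset.filter_subset_filter _ (Finset.filter_subset _ A)) hr

lemma FinMatroid.pointwise (M : FinMatroid γ) {w : γ → ℝ} (hinj : Function.Injective w)
    (F S : Finset γ) :
    ((F ∩ M.OPT w (S ∪ F)) \ S).card ≤ M.rank (M.Improving w S ∩ F) := by
  apply M.card_le_rank
  · exact M.indep_subset (M.indep_OPT hinj (S ∪ F))
      (fun x hx => (Finset.mem_inter.1 (Finset.mem_sdiff.1 hx).1).2)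
  · intro x hx
    rcases Finset.mem_sdiff.1 hx with ⟨hx1, hxS⟩
    rcases Finset.mem_inter.1 hx1 with ⟨hxF, hxO⟩
    refine Finset.mem_inter.2 ⟨?_, hxF⟩
    refine Finset.mem_filter.2 ⟨Finset.mem_univ x, hxS, ?_⟩
    exact M.mem_OPT_of_subset
      (Finset.insert_subset (Finset.mem_union_right _ hxF) Finset.subset_union_left)
      (Finset.mem_insert_self x S) hxO

lemma prodP_split {p : ℝ} {i : γ} {t : Finset γ} (hit : i ∉ t)
    (hcard : t.card < Fintype.card γ) :
    prodP p t = (1 - p) * (prodP p t + prodP p (insert i t)) := by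
  unfold prodP
  rw [Finset.card_insert_of_notMem hit]
  obtain ⟨m, hm⟩ : ∃ m, Fintype.card γ - t.card = m + 1 :=
    ⟨Fintype.card γ - t.card - 1, by omega⟩
  have hm2 : Fintype.card γ - (t.card + 1) = m := by omega
  rw [hm, hm2, pow_succ, pow_succ]
  ring

end Aux

/-- `E[rank(R ∩ F)] ≥ (1-p) · E[|F ∩ OPT_w(S ∪ F)|]` where `S` is a
`p`-sample of the ground set and `R` the corresponding set of improving elements. -/
theorem stmt13 (M : FinMatroid γ) (w : γ → ℝ) (hw : ∀ i, 0 ≤ w i)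
    (hinj : Function.Injective w) (p : ℝ) (hp0 : 0 < p) (hp1 : p < 1)
    (F : Finset γ) :
    ∑ S : Finset γ, prodP p S * (M.rank (M.Improving w S ∩ F) : ℝ) ≥
      (1 - p) * ∑ S : Finset γ, prodP p S * ((F ∩ M.OPT w (S ∪ F)).card : ℝ) := by
  have hprodnn : ∀ S : Finset γ, 0 ≤ prodP p S := fun S =>
    mul_nonneg (pow_nonneg hp0.le _) (pow_nonneg (by linarith) _)
  have cardsdiff : ∀ S : Finset γ, (((F ∩ M.OPT w (S ∪ F)) \ S).card : ℝ)
      = ∑ i ∈ F, (if i ∈ M.OPT w (S ∪ F) ∧ i ∉ S then (1:ℝ) else 0) := by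
    intro S
    rw [show (F ∩ M.OPT w (S ∪ F)) \ S
        = F.filter (fun i => i ∈ M.OPT w (S ∪ F) ∧ i ∉ S) by
      ext x
      simp [Finset.mem_sdiff, Finset.mem_inter, Finset.mem_filter, and_assoc]]
    rw [Finset.card_filter]
    push_cast
    rfl
  have cardinter : ∀ S : Finset γ, ((F ∩ M.OPT w (S ∪ F)).card : ℝ)
      = ∑ i ∈ F, (if i ∈ M.OPT w (S ∪ F) then (1:ℝ) else 0) := by
    intro S
    rw [show F ∩ M.OPT w (S ∪ F) = F.filter (fun i => i ∈ M.OPT w (S ∪ F)) by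
      ext x; simp [Finset.mem_inter, Finset.mem_filter]]
    rw [Finset.card_filter]
    push_cast
    rfl
  have peri : ∀ i ∈ F,
      ∑ S : Finset γ, prodP p S * (if i ∈ M.OPT w (S ∪ F) ∧ i ∉ S then (1:ℝ) else 0)
        = (1 - p) * ∑ S : Finset γ,
            prodP p S * (if i ∈ M.OPT w (S ∪ F) then (1:ℝ) else 0) := by
    intro i hiF
    have huniv : (Finset.univ : Finset (Finset γ))
        = (insert i ((Finset.univ : Finset γ).erase i)).powerset := by
      rw [Finset.insert_erase (Finset.mem_univ i), Finset.powerset_univ]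
    rw [huniv, Finset.sum_powerset_insert (Finset.notMem_erase i _),
      Finset.sum_powerset_insert (Finset.notMem_erase i _), mul_add,
      ← mul_add, ← Finset.sum_add_distrib, ← Finset.sum_add_distrib,
      Finset.mul_sum]
    apply Finset.sum_congr rfl
    intro t ht
    have hts : t ⊆ (Finset.univ : Finset γ).erase i := Finset.mem_powerset.1 ht
    have hit : i ∉ t := fun h => Finset.notMem_erase i _ (hts h)
    have hcard : t.card < Fintype.card γ := by
      have h1 : t.card ≤ ((Finset.univ : Finset γ).erase i).card :=
        Finset.card_le_card hts
      rw [Finset.card_erase_of_mem (Finset.mem_univ i), Finset.card_univ] at h1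
      have h2 : 0 < Fintype.card γ := Fintype.card_pos_iff.2 ⟨i⟩
      omega
    have hO : (insert i t) ∪ F = t ∪ F := by
      rw [Finset.insert_union,
        Finset.insert_eq_self.2 (Finset.mem_union_right _ hiF)]
    rw [hO]
    have hsplit := prodP_split (p := p) hit hcard
    simp only [hit, not_false_iff, and_true, Finset.mem_insert_self,
      not_true, and_false, if_false, mul_zero, add_zero]
    by_cases hmem : i ∈ M.OPT w (t ∪ F)
    · simp only [hmem, if_true, mul_one]
      linear_combination hsplit
    · simp [hmem]
  have key : ∑ S : Finset γ, prodP p S * (((F ∩ M.OPT w (S ∪ F)) \ S).card : ℝ)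
      = (1 - p) * ∑ S : Finset γ, prodP p S * ((F ∩ M.OPT w (S ∪ F)).card : ℝ) := by
    simp only [cardsdiff, cardinter, Finset.mul_sum]
    rw [Finset.sum_comm]
    conv_rhs => rw [Finset.sum_comm]
    refine Finset.sum_congr rfl fun i hiF => ?_
    rw [← Finset.mul_sum]
    exact peri i hiF
  rw [ge_iff_le, ← key]
  apply Finset.sum_le_sum
  intro S _
  exact mul_le_mul_of_nonneg_left (Nat.cast_le.2 (M.pointwise hinj F S)) (hprodnn S)
end

section
/- Fix a matroid M with distinct nonnegative weights w and p ∈ (0,1). The random set R of improving elements with parameter p is (1/p)-uncontentious: for every subset F of the ground set, E[|R ∩ F|] ≤ (1/p)·E[rank(R ∩ F)]. -/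
open Finset BigOperators
open scoped Classical

variable {γ : Type*} [DecidableEq γ] [Fintype γ]

namespace FinMatroid

lemma card_le_rank_s16 (M : FinMatroid γ) {A T : Finset γ} (hT : T ⊆ A) (h : M.Indep T) :
    T.card ≤ M.rank A :=
  Finset.le_sup (by simp [Finset.mem_filter, Finset.mem_powerset, hT, h])

lemma rank_mono (M : FinMatroid γ) {A B : Finset γ} (h : A ⊆ B) : M.rank A ≤ M.rank B := by
  apply Finset.sup_mono
  intro T hT
  simp only [Finset.mem_filter, Finset.mem_powerset] at *
  exact ⟨hT.1.trans h, hT.2⟩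

lemma exists_max (M : FinMatroid γ) (A : Finset γ) :
    ∃ T, T ⊆ A ∧ M.Indep T ∧ T.card = M.rank A := by
  obtain ⟨T, hT, hEq⟩ := Finset.exists_mem_eq_sup (A.powerset.filter fun S => M.Indep S)
    ⟨∅, by simp [M.indep_empty]⟩ Finset.card
  simp only [Finset.mem_filter, Finset.mem_powerset] at hT
  exact ⟨T, hT.1, hT.2, hEq.symm⟩

lemma rank_indep (M : FinMatroid γ) {A : Finset γ} (h : M.Indep A) : M.rank A = A.card := by
  refine le_antisymm (Finset.sup_le ?_) (M.card_le_rank_s16 Finset.Subset.rfl h)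
  intro T hT
  simp only [Finset.mem_filter, Finset.mem_powerset] at hT
  exact Finset.card_le_card hT.1

lemma rank_insert_le (M : FinMatroid γ) (A : Finset γ) (i : γ) :
    M.rank (insert i A) ≤ M.rank A + 1 := by
  apply Finset.sup_le
  intro T hT
  simp only [Finset.mem_filter, Finset.mem_powerset] at hT
  have h1 : T.erase i ⊆ A := by
    intro x hx
    have hxT := Finset.mem_of_mem_erase hx
    have := hT.1 hxT
    rcases Finset.mem_insert.mp this with rfl | hxA
    · exact absurd rfl (Finset.ne_of_mem_erase hx)
    · exact hxA
  have h2 : M.Indep (T.erase i) := M.indep_subset hT.2 (Finset.erase_subset _ _)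
  have h3 : (T.erase i).card ≤ M.rank A := M.card_le_rank_s16 h1 h2
  have h4 : T.card ≤ (T.erase i).card + 1 := by
    by_cases hi : i ∈ T
    · rw [Finset.card_erase_of_mem hi]; omega
    · rw [Finset.erase_eq_of_notMem hi]; omega
  omega

lemma exists_insert_of_lt (M : FinMatroid γ) {I A : Finset γ} (hI : M.Indep I)
    (h : I.card < M.rank A) : ∃ x ∈ A, x ∉ I ∧ M.Indep (insert x I) := by
  obtain ⟨T, hTA, hTind, hTcard⟩ := M.exists_max A
  obtain ⟨x, hxT, hxI, hx⟩ := M.indep_exchange hI hTind (by omega)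
  exact ⟨x, hTA hxT, hxI, hx⟩

lemma exists_max_superset_aux (M : FinMatroid γ) (A : Finset γ) :
    ∀ n : ℕ, ∀ I : Finset γ, M.Indep I → I ⊆ A → M.rank A ≤ I.card + n →
      ∃ B, I ⊆ B ∧ B ⊆ A ∧ M.Indep B ∧ B.card = M.rank A := by
  intro n
  induction n with
  | zero =>
    intro I hI hIA hle
    exact ⟨I, Finset.Subset.rfl, hIA, hI,
      le_antisymm (M.card_le_rank_s16 hIA hI) (by omega)⟩
  | succ n ih =>
    intro I hI hIA hle
    by_cases h : I.card < M.rank A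
    · obtain ⟨x, hxA, hxI, hx⟩ := M.exists_insert_of_lt hI h
      obtain ⟨B, h1, h2, h3, h4⟩ := ih (insert x I) hx (Finset.insert_subset hxA hIA)
        (by rw [Finset.card_insert_of_notMem hxI]; omega)
      exact ⟨B, (Finset.subset_insert _ _).trans h1, h2, h3, h4⟩
    · exact ⟨I, Finset.Subset.rfl, hIA, hI, le_antisymm (M.card_le_rank_s16 hIA hI) (by omega)⟩

lemma exists_max_superset (M : FinMatroid γ) {I A : Finset γ} (hI : M.Indep I) (hIA : I ⊆ A) :
    ∃ B, I ⊆ B ∧ B ⊆ A ∧ M.Indep B ∧ B.card = M.rank A :=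
  M.exists_max_superset_aux A (M.rank A) I hI hIA (by omega)

/-- L2: if `i` increases the rank of `B ⊇ A`, it increases the rank of `A`. -/
lemma rank_insert_mono (M : FinMatroid γ) {A B : Finset γ} {i : γ} (hAB : A ⊆ B)
    (h : M.rank B < M.rank (insert i B)) : M.rank A < M.rank (insert i A) := by
  have hiB : i ∉ B := by
    intro hi
    rw [Finset.insert_eq_self.mpr hi] at h
    omega
  have hiA : i ∉ A := fun hi => hiB (hAB hi)
  obtain ⟨IA, hIAA, hIAind, hIAcard⟩ := M.exists_max A
  obtain ⟨IB, hsub, hIBB, hIBind, hIBcard⟩ := M.exists_max_superset hIAind (hIAA.trans hAB)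
  obtain ⟨T, hT1, hT2, hT3⟩ := M.exists_max (insert i B)
  have hlt : IB.card < T.card := by omega
  obtain ⟨x, hxT, hxIB, hxind⟩ := M.indep_exchange hIBind hT2 hlt
  have hx : x = i := by
    by_contra hne
    have hxB : x ∈ B := by
      rcases Finset.mem_insert.mp (hT1 hxT) with rfl | hxB
      · exact absurd rfl hne
      · exact hxB
    have hc : (insert x IB).card ≤ M.rank B :=
      M.card_le_rank_s16 (Finset.insert_subset hxB hIBB) hxind
    rw [Finset.card_insert_of_notMem hxIB] at hc
    omega
  subst hx
  have hins : M.Indep (insert x IA) :=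
    M.indep_subset hxind (Finset.insert_subset_insert _ hsub)
  have hxIA : x ∉ IA := fun hxx => hiA (hIAA hxx)
  have hc : (insert x IA).card ≤ M.rank (insert x A) :=
    M.card_le_rank_s16 (Finset.insert_subset (Finset.mem_insert_self _ _)
      (hIAA.trans (Finset.subset_insert _ _))) hins
  rw [Finset.card_insert_of_notMem hxIA] at hc
  omega

lemma opt_subset (M : FinMatroid γ) (w : γ → ℝ) (A : Finset γ) : M.OPT w A ⊆ A :=
  Finset.filter_subset _ _

/-- removing the minimum-weight element commutes with OPT -/
lemma opt_erase_min (M : FinMatroid γ) (w : γ → ℝ) {A : Finset γ} {i0 : γ} (hi0 : i0 ∈ A)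
    (hmin : ∀ j ∈ A, w i0 ≤ w j) :
    M.OPT w (A.erase i0) = (M.OPT w A).erase i0 := by
  have hfil : ∀ i ∈ A, (A.erase i0).filter (fun j => w i < w j)
      = A.filter (fun j => w i < w j) := by
    intro i hi
    rw [Finset.filter_erase]
    apply Finset.erase_eq_of_notMem
    simp only [Finset.mem_filter, not_and]
    intro _
    exact not_lt.mpr (le_trans (hmin i0 hi0) (hmin i hi))
  ext i
  simp only [OPT, Finset.mem_erase, Finset.mem_filter]
  constructor
  · rintro ⟨⟨hne, hiA⟩, hpos, hrk⟩
    rw [hfil i hiA] at hrk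
    exact ⟨hne, hiA, hpos, hrk⟩
  · rintro ⟨hne, ⟨hiA, hpos, hrk⟩⟩
    rw [← hfil i hiA] at hrk
    exact ⟨⟨hne, hiA⟩, hpos, hrk⟩

lemma opt_greedy (M : FinMatroid γ) (w : γ → ℝ) (hinj : Function.Injective w) (A : Finset γ) :
    M.Indep (M.OPT w A) ∧ (M.OPT w A).card = M.rank (A.filter fun i => 0 < w i) := by
  induction A using Finset.strongInduction with
  | _ A ih =>
  rcases A.eq_empty_or_nonempty with rfl | hne
  · constructor
    · simpa [OPT] using M.indep_empty
    · simp only [OPT, Finset.filter_empty]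
      rw [M.rank_indep M.indep_empty]
  · obtain ⟨i0, hi0A, hmin⟩ := A.exists_min_image w hne
    have hAss : A.erase i0 ⊂ A := Finset.erase_ssubset hi0A
    obtain ⟨hO'ind, hO'card⟩ := ih _ hAss
    have hOe := M.opt_erase_min w hi0A hmin
    by_cases h0 : i0 ∈ M.OPT w A
    · -- i0 selected
      have hcond := (Finset.mem_filter.mp h0).2
      obtain ⟨hpos, hrk⟩ := hcond
      have hall : ∀ j ∈ A, 0 < w j := fun j hj => lt_of_lt_of_le hpos (hmin j hj)
      have hAf : A.filter (fun j => 0 < w j) = A := Finset.filter_true_of_mem hall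
      have hA'f : (A.erase i0).filter (fun j => 0 < w j) = A.erase i0 :=
        Finset.filter_true_of_mem (fun j hj => hall j (Finset.mem_of_mem_erase hj))
      have hfe : A.filter (fun j => w i0 < w j) = A.erase i0 := by
        ext j
        simp only [Finset.mem_filter, Finset.mem_erase]
        constructor
        · rintro ⟨hj, hlt⟩
          exact ⟨fun hh => by subst hh; exact lt_irrefl _ hlt, hj⟩
        · rintro ⟨hne', hj⟩
          exact ⟨hj, lt_of_le_of_ne (hmin j hj) (fun hh => hne' (hinj hh.symm))⟩
      rw [hfe, Finset.insert_erase hi0A] at hrk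
      have hrle : M.rank A ≤ M.rank (A.erase i0) + 1 := by
        conv_lhs => rw [← Finset.insert_erase hi0A]
        exact M.rank_insert_le _ _
      have hreq : M.rank A = M.rank (A.erase i0) + 1 := by omega
      -- show Indep (insert i0 O')
      have hO'sub : M.OPT w (A.erase i0) ⊆ A.erase i0 := M.opt_subset w _
      obtain ⟨T, hTA, hTind, hTcard⟩ := M.exists_max A
      have hlt : (M.OPT w (A.erase i0)).card < T.card := by
        rw [hTcard, hO'card, hA'f]; omega
      obtain ⟨x, hxT, hxO', hxind⟩ := M.indep_exchange hO'ind hTind hlt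
      have hx : x = i0 := by
        by_contra hnex
        have hxe : insert x (M.OPT w (A.erase i0)) ⊆ A.erase i0 := by
          apply Finset.insert_subset _ hO'sub
          exact Finset.mem_erase.mpr ⟨hnex, hTA hxT⟩
        have hc := M.card_le_rank_s16 hxe hxind
        rw [Finset.card_insert_of_notMem hxO', hO'card, hA'f] at hc
        omega
      rw [hx] at hxind
      have hOA : M.OPT w A = insert i0 (M.OPT w (A.erase i0)) := by
        rw [hOe, Finset.insert_erase h0]
      have hxO'2 : i0 ∉ M.OPT w (A.erase i0) := fun hh => (Finset.mem_erase.mp (hO'sub hh)).1 rfl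
      constructor
      · rw [hOA]; exact hxind
      · rw [hOA, Finset.card_insert_of_notMem hxO'2, hO'card, hA'f, hAf, hreq]
    · -- i0 not selected
      have hOA : M.OPT w A = M.OPT w (A.erase i0) := by
        rw [hOe, Finset.erase_eq_of_notMem h0]
      constructor
      · rw [hOA]; exact hO'ind
      · rw [hOA, hO'card]
        by_cases hpos : 0 < w i0
        · -- all weights positive, and rank A = rank (A.erase i0)
          have hall : ∀ j ∈ A, 0 < w j := fun j hj => lt_of_lt_of_le hpos (hmin j hj)
          have hAf : A.filter (fun j => 0 < w j) = A := Finset.filter_true_of_mem hall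
          have hA'f : (A.erase i0).filter (fun j => 0 < w j) = A.erase i0 :=
            Finset.filter_true_of_mem (fun j hj => hall j (Finset.mem_of_mem_erase hj))
          have hfe : A.filter (fun j => w i0 < w j) = A.erase i0 := by
            ext j
            simp only [Finset.mem_filter, Finset.mem_erase]
            constructor
            · rintro ⟨hj, hlt⟩
              exact ⟨fun hh => by subst hh; exact lt_irrefl _ hlt, hj⟩
            · rintro ⟨hne', hj⟩
              exact ⟨hj, lt_of_le_of_ne (hmin j hj) (fun hh => hne' (hinj hh.symm))⟩
          have hnc : ¬ (M.rank (A.filter fun j => w i0 < w j)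
              < M.rank (insert i0 (A.filter fun j => w i0 < w j))) := by
            intro hcc
            exact h0 (Finset.mem_filter.mpr ⟨hi0A, hpos, hcc⟩)
          rw [hfe, Finset.insert_erase hi0A] at hnc
          have := M.rank_mono (Finset.erase_subset i0 A)
          rw [hAf, hA'f]
          omega
        · -- w i0 ≤ 0 : filters agree
          congr 1
          rw [Finset.filter_erase]
          rw [Finset.erase_eq_of_notMem]
          simp only [Finset.mem_filter, not_and]
          intro _
          exact hpos


end FinMatroid

lemma prodP_nonneg {p : ℝ} (h0 : 0 ≤ p) (h1 : p ≤ 1) (S : Finset γ) : 0 ≤ prodP p S :=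
  mul_nonneg (pow_nonneg h0 _) (pow_nonneg (by linarith) _)

lemma prodP_insert {p : ℝ} {i : γ} {S : Finset γ} (h : i ∉ S) :
    prodP p (insert i S) * (1 - p) = p * prodP p S := by
  have hne : S ≠ univ := by
    intro hh; rw [hh] at h; exact h (Finset.mem_univ i)
  have hcard : S.card < Fintype.card γ := by
    rw [← Finset.card_univ]
    exact Finset.card_lt_card (Finset.ssubset_univ_iff.mpr hne)
  unfold prodP
  rw [Finset.card_insert_of_notMem h]
  have h1 : Fintype.card γ - (S.card + 1) + 1 = Fintype.card γ - S.card := by omega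
  calc p ^ (S.card + 1) * (1 - p) ^ (Fintype.card γ - (S.card + 1)) * (1 - p)
      = p * (p ^ S.card * ((1 - p) ^ (Fintype.card γ - (S.card + 1)) * (1 - p))) := by ring
    _ = p * (p ^ S.card * (1 - p) ^ (Fintype.card γ - S.card)) := by
        rw [← pow_succ, h1]

lemma pair_sum (p : ℝ) (i : γ) (Q : Finset γ → Prop)
    (hQ : ∀ S, Q (insert i S) ↔ Q S) :
    (1 - p) * ∑ S ∈ univ.filter (fun S : Finset γ => i ∈ S ∧ Q S), prodP p S
      = p * ∑ S ∈ univ.filter (fun S : Finset γ => i ∉ S ∧ Q S), prodP p S := by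
  rw [Finset.mul_sum, Finset.mul_sum]
  refine Finset.sum_bij' (fun S _ => S.erase i) (fun S _ => insert i S) ?_ ?_ ?_ ?_ ?_
  · intro S hS
    simp only [Finset.mem_filter, Finset.mem_univ, true_and] at hS ⊢
    refine ⟨Finset.notMem_erase _ _, ?_⟩
    rw [← hQ]
    rw [Finset.insert_erase hS.1]
    exact hS.2
  · intro S hS
    simp only [Finset.mem_filter, Finset.mem_univ, true_and] at hS ⊢
    exact ⟨Finset.mem_insert_self _ _, (hQ S).mpr hS.2⟩
  · intro S hS
    simp only [Finset.mem_filter, Finset.mem_univ, true_and] at hS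
    exact Finset.insert_erase hS.1
  · intro S hS
    simp only [Finset.mem_filter, Finset.mem_univ, true_and] at hS
    exact Finset.erase_insert hS.1
  · intro S hS
    simp only [Finset.mem_filter, Finset.mem_univ, true_and] at hS
    have h1 : i ∉ S.erase i := Finset.notMem_erase _ _
    have := prodP_insert (p := p) h1
    rw [Finset.insert_erase hS.1] at this
    rw [mul_comm (1 - p)]
    rw [this]

lemma marg_split (p : ℝ) (i : γ) (Q : Finset γ → Prop)
    (hQ : ∀ S, Q (insert i S) ↔ Q S) :
    (∑ S ∈ univ.filter (fun S : Finset γ => i ∈ S ∧ Q S), prodP p S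
      = p * ∑ S ∈ univ.filter (fun S : Finset γ => Q S), prodP p S) ∧
    (∑ S ∈ univ.filter (fun S : Finset γ => i ∉ S ∧ Q S), prodP p S
      = (1 - p) * ∑ S ∈ univ.filter (fun S : Finset γ => Q S), prodP p S) := by
  have hpair := pair_sum p i Q hQ
  have hsplit : ∑ S ∈ univ.filter (fun S : Finset γ => Q S), prodP p S
      = ∑ S ∈ univ.filter (fun S : Finset γ => i ∈ S ∧ Q S), prodP p S
        + ∑ S ∈ univ.filter (fun S : Finset γ => i ∉ S ∧ Q S), prodP p S := by
    rw [← Finset.sum_filter_add_sum_filter_not (univ.filter fun S : Finset γ => Q S)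
      (fun S => i ∈ S)]
    congr 1 <;> · rw [Finset.filter_filter]
                  apply Finset.sum_congr _ (fun _ _ => rfl)
                  apply Finset.filter_congr
                  intro S _
                  simp [and_comm]
  constructor
  · calc ∑ S ∈ univ.filter (fun S : Finset γ => i ∈ S ∧ Q S), prodP p S
        = p * ∑ S ∈ univ.filter (fun S : Finset γ => i ∈ S ∧ Q S), prodP p S
          + (1 - p) * ∑ S ∈ univ.filter (fun S : Finset γ => i ∈ S ∧ Q S), prodP p S := by ring
      _ = p * ∑ S ∈ univ.filter (fun S : Finset γ => i ∈ S ∧ Q S), prodP p S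
          + p * ∑ S ∈ univ.filter (fun S : Finset γ => i ∉ S ∧ Q S), prodP p S := by
            rw [hpair]
      _ = p * ∑ S ∈ univ.filter (fun S : Finset γ => Q S), prodP p S := by
            rw [hsplit]; ring
  · calc ∑ S ∈ univ.filter (fun S : Finset γ => i ∉ S ∧ Q S), prodP p S
        = (1 - p) * ∑ S ∈ univ.filter (fun S : Finset γ => i ∈ S ∧ Q S), prodP p S
          + (1 - p) * ∑ S ∈ univ.filter (fun S : Finset γ => i ∉ S ∧ Q S), prodP p S := by
            rw [hpair]; ring
      _ = (1 - p) * ∑ S ∈ univ.filter (fun S : Finset γ => Q S), prodP p S := by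
            rw [hsplit]; ring

lemma sum_card_eq (p : ℝ) (F : Finset γ) (Pred : γ → Finset γ → Prop) :
    ∑ S : Finset γ, prodP p S * ((F.filter (fun i => Pred i S)).card : ℝ)
      = ∑ i ∈ F, ∑ S ∈ univ.filter (fun S : Finset γ => Pred i S), prodP p S := by
  have h1 : ∀ S : Finset γ, ((F.filter (fun i => Pred i S)).card : ℝ)
      = ∑ i ∈ F, if Pred i S then (1 : ℝ) else 0 := by
    intro S
    rw [Finset.card_filter]
    push_cast
    rfl
  simp_rw [h1, Finset.mul_sum]
  rw [Finset.sum_comm]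
  apply Finset.sum_congr rfl
  intro i _
  rw [Finset.sum_filter]
  apply Finset.sum_congr rfl
  intro S _
  by_cases h : Pred i S <;> simp [h]

set_option maxHeartbeats 2000000 in
/-- the random set of improving elements with parameter `p` is
`(1/p)`-uncontentious: `E[|R ∩ F|] ≤ (1/p) · E[rank(R ∩ F)]` for every `F`. -/
theorem stmt16 (M : FinMatroid γ) (w : γ → ℝ) (hw : ∀ i, 0 ≤ w i)
    (hinj : Function.Injective w) (p : ℝ) (hp0 : 0 < p) (hp1 : p < 1) :
    ∀ F : Finset γ,
      ∑ S : Finset γ, prodP p S * ((M.Improving w S ∩ F).card : ℝ) ≤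
        (1 / p) * ∑ S : Finset γ, prodP p S * (M.rank (M.Improving w S ∩ F) : ℝ) := by
  intro F
  -- predicates
  set Bp : γ → Finset γ → Prop := fun i S => 0 < w i ∧
    M.rank (S.filter fun j => w i < w j) < M.rank (insert i (S.filter fun j => w i < w j))
    with hBp
  set Cp : γ → Finset γ → Prop := fun i S => 0 < w i ∧
    M.rank ((S ∪ F).filter fun j => w i < w j)
      < M.rank (insert i ((S ∪ F).filter fun j => w i < w j)) with hCp
  have hfilins : ∀ (i : γ) (S : Finset γ),
      (insert i S).filter (fun j => w i < w j) = S.filter (fun j => w i < w j) := by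
    intro i S
    rw [Finset.filter_insert]
    rw [if_neg (lt_irrefl _)]
  -- membership in OPT of insert
  have h_impB : ∀ (i : γ) (S : Finset γ), (i ∈ M.OPT w (insert i S)) ↔ Bp i S := by
    intro i S
    simp only [FinMatroid.OPT, Finset.mem_filter, Finset.mem_insert, hfilins, hBp]
    tauto
  -- R ∩ F as a filter
  have hRF : ∀ S : Finset γ, M.Improving w S ∩ F
      = F.filter (fun i => i ∉ S ∧ Bp i S) := by
    intro S
    ext i
    simp only [FinMatroid.Improving, Finset.mem_inter, Finset.mem_filter, Finset.mem_univ,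
      true_and, h_impB]
    tauto
  have hBinv : ∀ (i : γ) (S : Finset γ), Bp i (insert i S) ↔ Bp i S := by
    intro i S
    simp only [hBp, hfilins]
  have hCinv : ∀ (i : γ) (S : Finset γ), Cp i (insert i S) ↔ Cp i S := by
    intro i S
    simp only [hCp, Finset.insert_union, hfilins]
  have hOPTS : ∀ S : Finset γ, M.OPT w S ∩ F = F.filter (fun i => i ∈ S ∧ Bp i S) := by
    intro S
    ext i
    simp only [FinMatroid.OPT, Finset.mem_inter, Finset.mem_filter, hBp]
    tauto
  have hOPTSF : ∀ S : Finset γ, M.OPT w (S ∪ F) ∩ F = F.filter (fun i => Cp i S) := by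
    intro S
    ext i
    simp only [FinMatroid.OPT, Finset.mem_inter, Finset.mem_filter, Finset.mem_union, hCp]
    tauto
  -- pointwise key inequality 1
  have key1 : ∀ S : Finset γ,
      ((M.OPT w S ∩ F).card : ℝ) ≤ ((M.OPT w (S ∪ F) ∩ F).card : ℝ) := by
    intro S
    have hsub : M.OPT w (S ∪ F) \ F ⊆ M.OPT w S \ F := by
      intro d hd
      rw [Finset.mem_sdiff] at hd ⊢
      obtain ⟨hd1, hd2⟩ := hd
      refine ⟨?_, hd2⟩
      simp only [FinMatroid.OPT, Finset.mem_filter, Finset.mem_union] at hd1 ⊢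
      obtain ⟨hdm, hpos, hrk⟩ := hd1
      have hdS : d ∈ S := by tauto
      refine ⟨hdS, hpos, ?_⟩
      exact M.rank_insert_mono (Finset.filter_subset_filter _ Finset.subset_union_left) hrk
    have h1 := (M.opt_greedy w hinj S).2
    have h2 := (M.opt_greedy w hinj (S ∪ F)).2
    have h3 := Finset.card_inter_add_card_sdiff (M.OPT w S) F
    have h4 := Finset.card_inter_add_card_sdiff (M.OPT w (S ∪ F)) F
    have h5 : M.rank (S.filter fun i => 0 < w i) ≤ M.rank ((S ∪ F).filter fun i => 0 < w i) :=
      M.rank_mono (Finset.filter_subset_filter _ Finset.subset_union_left)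
    have h6 := Finset.card_le_card hsub
    have : (M.OPT w S ∩ F).card ≤ (M.OPT w (S ∪ F) ∩ F).card := by omega
    exact_mod_cast this
  -- pointwise key inequality 2
  have key2 : ∀ S : Finset γ,
      ((F.filter (fun i => i ∉ S ∧ Cp i S)).card : ℝ) ≤ (M.rank (M.Improving w S ∩ F) : ℝ) := by
    intro S
    have hJopt : F.filter (fun i => i ∉ S ∧ Cp i S) ⊆ M.OPT w (S ∪ F) := by
      intro i hi
      rw [Finset.mem_filter] at hi
      obtain ⟨hiF, hiS, hC⟩ := hi
      simp only [FinMatroid.OPT, Finset.mem_filter, Finset.mem_union]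
      exact ⟨Or.inr hiF, hC.1, hC.2⟩
    have hJind : M.Indep (F.filter (fun i => i ∉ S ∧ Cp i S)) :=
      M.indep_subset (M.opt_greedy w hinj (S ∪ F)).1 hJopt
    have hJRF : F.filter (fun i => i ∉ S ∧ Cp i S) ⊆ M.Improving w S ∩ F := by
      intro i hi
      rw [Finset.mem_filter] at hi
      obtain ⟨hiF, hiS, hC⟩ := hi
      rw [hRF]
      rw [Finset.mem_filter]
      refine ⟨hiF, hiS, hC.1, ?_⟩
      exact M.rank_insert_mono (Finset.filter_subset_filter _ Finset.subset_union_left) hC.2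
    have := M.card_le_rank_s16 hJRF hJind
    exact_mod_cast this
  -- sums
  have hprodnn : ∀ S : Finset γ, 0 ≤ prodP p S := prodP_nonneg (le_of_lt hp0) (le_of_lt hp1)
  have E1 : ∑ S : Finset γ, prodP p S * ((M.Improving w S ∩ F).card : ℝ)
      = ∑ i ∈ F, ∑ S ∈ univ.filter (fun S : Finset γ => i ∉ S ∧ Bp i S), prodP p S := by
    simp_rw [hRF]
    convert sum_card_eq p F (fun i S => i ∉ S ∧ Bp i S) using 3 <;> congr!
  have E3 : ∑ i ∈ F, ∑ S ∈ univ.filter (fun S : Finset γ => i ∈ S ∧ Bp i S), prodP p S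
      = ∑ S : Finset γ, prodP p S * ((M.OPT w S ∩ F).card : ℝ) := by
    simp_rw [hOPTS]
    convert (sum_card_eq p F (fun i S => i ∈ S ∧ Bp i S)).symm using 3 <;> congr!
  have E5 : ∑ S : Finset γ, prodP p S * ((M.OPT w (S ∪ F) ∩ F).card : ℝ)
      = ∑ i ∈ F, ∑ S ∈ univ.filter (fun S : Finset γ => Cp i S), prodP p S := by
    simp_rw [hOPTSF]
    convert sum_card_eq p F (fun i S => Cp i S) using 3 <;> congr!
  have E7 : ∑ i ∈ F, ∑ S ∈ univ.filter (fun S : Finset γ => i ∉ S ∧ Cp i S), prodP p S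
      = ∑ S : Finset γ, prodP p S * ((F.filter (fun i => i ∉ S ∧ Cp i S)).card : ℝ) :=
    by convert (sum_card_eq p F (fun i S => i ∉ S ∧ Cp i S)).symm using 3 <;> congr!
  -- abbreviations
  set a := ∑ i ∈ F, ∑ S ∈ univ.filter (fun S : Finset γ => Bp i S), prodP p S with ha
  set c := ∑ i ∈ F, ∑ S ∈ univ.filter (fun S : Finset γ => Cp i S), prodP p S with hc
  have hYB : ∑ i ∈ F, ∑ S ∈ univ.filter (fun S : Finset γ => i ∉ S ∧ Bp i S), prodP p S
      = (1 - p) * a := by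
    rw [ha, Finset.mul_sum]
    refine Finset.sum_congr rfl fun i _ => ?_
    convert (marg_split p i (Bp i) (hBinv i)).2 using 3 <;> congr!
  have hXB : ∑ i ∈ F, ∑ S ∈ univ.filter (fun S : Finset γ => i ∈ S ∧ Bp i S), prodP p S
      = p * a := by
    rw [ha, Finset.mul_sum]
    refine Finset.sum_congr rfl fun i _ => ?_
    convert (marg_split p i (Bp i) (hBinv i)).1 using 3 <;> congr!
  have hYC : ∑ i ∈ F, ∑ S ∈ univ.filter (fun S : Finset γ => i ∉ S ∧ Cp i S), prodP p S
      = (1 - p) * c := by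
    rw [hc, Finset.mul_sum]
    refine Finset.sum_congr rfl fun i _ => ?_
    convert (marg_split p i (Cp i) (hCinv i)).2 using 3 <;> congr!
  -- the chain
  have hA1A2 : ∑ S : Finset γ, prodP p S * ((M.OPT w S ∩ F).card : ℝ)
      ≤ ∑ S : Finset γ, prodP p S * ((M.OPT w (S ∪ F) ∩ F).card : ℝ) :=
    Finset.sum_le_sum fun S _ => mul_le_mul_of_nonneg_left (key1 S) (hprodnn S)
  have hA3A4 : ∑ S : Finset γ, prodP p S * ((F.filter (fun i => i ∉ S ∧ Cp i S)).card : ℝ)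
      ≤ ∑ S : Finset γ, prodP p S * (M.rank (M.Improving w S ∩ F) : ℝ) :=
    Finset.sum_le_sum fun S _ => mul_le_mul_of_nonneg_left (key2 S) (hprodnn S)
  -- combine
  have hpa : p * a ≤ c := by
    rw [← hXB]
    rw [E3]
    calc ∑ S : Finset γ, prodP p S * ((M.OPT w S ∩ F).card : ℝ)
        ≤ ∑ S : Finset γ, prodP p S * ((M.OPT w (S ∪ F) ∩ F).card : ℝ) := hA1A2
      _ = c := by rw [E5]
  have hfin : (1 - p) * c ≤ ∑ S : Finset γ, prodP p S * (M.rank (M.Improving w S ∩ F) : ℝ) := by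
    rw [← hYC, E7]
    exact hA3A4
  rw [E1, hYB]
  calc (1 - p) * a = (1 / p) * ((1 - p) * (p * a)) := by
        field_simp
      _ ≤ (1 / p) * ((1 - p) * c) := by
        apply mul_le_mul_of_nonneg_left _ (by positivity)
        apply mul_le_mul_of_nonneg_left hpa (by linarith)
      _ ≤ (1 / p) * ∑ S : Finset γ, prodP p S * (M.rank (M.Improving w S ∩ F) : ℝ) := by
        apply mul_le_mul_of_nonneg_left hfin (by positivity)
end
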